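/- Let A be a ring with ideal I and subrings A' ⊇ B' such that A = A' ⊕ I and B = B' ⊕ I as additive groups (where B = B' + I is a subring of A). Then A' is a separable extension of B' if and only if A is a separable extension of B. -/

import Mathlib

open scoped TensorProduct

section SepPrelude

variable {A : Type*} [Ring A]

/-- Relations defining `A ⊗_B A` as a quotient of `A ⊗_ℤ A`. -/
def sepRel (B : Subring A) : Submodule ℤ (TensorProduct ℤ A A) :=
  Submodule.span ℤ
    {z | ∃ (x y : A) (b : B), z = (x * (b : A)) ⊗ₜ[ℤ] y - x ⊗ₜ[ℤ] ((b : A) * y)}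

/-- The tensor product `A ⊗_B A` of `A` with itself over the subring `B`. -/
abbrev TensorOverSub (B : Subring A) : Type _ := TensorProduct ℤ A A ⧸ sepRel B

/-- The basic tensor `x ⊗_B y`. -/
noncomputable def tmulB (B : Subring A) (x y : A) : TensorOverSub B :=
  Submodule.Quotient.mk (x ⊗ₜ[ℤ] y)

/-- Left multiplication `a • (x ⊗ y) = (a*x) ⊗ y` on `A ⊗_B A`. -/
noncomputable def lmulB (B : Subring A) (a : A) :
    TensorOverSub B →ₗ[ℤ] TensorOverSub B :=
  Submodule.mapQ _ _ (LinearMap.rTensor A (LinearMap.mulLeft ℤ a)) (by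
    refine Submodule.span_le.mpr ?_
    rintro _ ⟨x, y, b, rfl⟩
    show (LinearMap.rTensor A (LinearMap.mulLeft ℤ a)) ((x * (b : A)) ⊗ₜ[ℤ] y - x ⊗ₜ[ℤ] ((b : A) * y)) ∈ sepRel B
    rw [map_sub, LinearMap.rTensor_tmul, LinearMap.rTensor_tmul, LinearMap.mulLeft_apply,
      LinearMap.mulLeft_apply]
    exact Submodule.subset_span ⟨a * x, y, b, by rw [mul_assoc a x (b : A)]⟩)

/-- Right multiplication `(x ⊗ y) • a = x ⊗ (y*a)` on `A ⊗_B A`. -/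
noncomputable def rmulB (B : Subring A) (a : A) :
    TensorOverSub B →ₗ[ℤ] TensorOverSub B :=
  Submodule.mapQ _ _ (LinearMap.lTensor A (LinearMap.mulRight ℤ a)) (by
    refine Submodule.span_le.mpr ?_
    rintro _ ⟨x, y, b, rfl⟩
    show (LinearMap.lTensor A (LinearMap.mulRight ℤ a)) ((x * (b : A)) ⊗ₜ[ℤ] y - x ⊗ₜ[ℤ] ((b : A) * y)) ∈ sepRel B
    rw [map_sub, LinearMap.lTensor_tmul, LinearMap.lTensor_tmul, LinearMap.mulRight_apply,
      LinearMap.mulRight_apply]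
    exact Submodule.subset_span ⟨x, y * a, b, by rw [mul_assoc]⟩)

/-- The multiplication map `μ : A ⊗_B A → A`. -/
noncomputable def mulMapB (B : Subring A) : TensorOverSub B →ₗ[ℤ] A :=
  Submodule.liftQ _ (LinearMap.mul' ℤ A) (by
    refine Submodule.span_le.mpr ?_
    rintro _ ⟨x, y, b, rfl⟩
    show LinearMap.mul' ℤ A ((x * (b : A)) ⊗ₜ[ℤ] y - x ⊗ₜ[ℤ] ((b : A) * y)) = 0
    rw [map_sub, LinearMap.mul'_apply, LinearMap.mul'_apply, mul_assoc, sub_self])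

/-- `A` is a separable extension of `B`: there is a separability element in `A ⊗_B A`. -/
def IsSepExt (B : Subring A) : Prop :=
  ∃ e : TensorOverSub B, (∀ a : A, lmulB B a e = rmulB B a e) ∧ mulMapB B e = 1

end SepPrelude

section AuxSep

variable {A : Type*} [Ring A]

lemma TensorOverSub.induction (B : Subring A) {P : TensorOverSub B → Prop}
    (zero : P 0) (tmul : ∀ x y : A, P (tmulB B x y))
    (add : ∀ s t, P s → P t → P (s + t)) : ∀ t, P t := by
  intro t
  obtain ⟨z, rfl⟩ := Submodule.Quotient.mk_surjective _ t
  induction z using TensorProduct.induction_on with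
  | zero => simpa using zero
  | tmul x y => exact tmul x y
  | add s t hs ht => simpa [Submodule.Quotient.mk_add] using add _ _ hs ht

@[simp] lemma tmulB_zero_left (B : Subring A) (y : A) : tmulB B 0 y = 0 := by
  simp [tmulB, TensorProduct.zero_tmul]

@[simp] lemma tmulB_zero_right (B : Subring A) (x : A) : tmulB B x 0 = 0 := by
  simp [tmulB, TensorProduct.tmul_zero]

@[simp] lemma tmulB_add_left (B : Subring A) (x x' y : A) :
    tmulB B (x + x') y = tmulB B x y + tmulB B x' y := by
  simp [tmulB, TensorProduct.add_tmul, ← Submodule.Quotient.mk_add]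

@[simp] lemma tmulB_add_right (B : Subring A) (x y y' : A) :
    tmulB B x (y + y') = tmulB B x y + tmulB B x y' := by
  simp [tmulB, TensorProduct.tmul_add, ← Submodule.Quotient.mk_add]

@[simp] lemma lmulB_tmulB (B : Subring A) (a x y : A) :
    lmulB B a (tmulB B x y) = tmulB B (a * x) y := by
  rfl

@[simp] lemma rmulB_tmulB (B : Subring A) (a x y : A) :
    rmulB B a (tmulB B x y) = tmulB B x (y * a) := by
  rfl

@[simp] lemma mulMapB_tmulB (B : Subring A) (x y : A) :
    mulMapB B (tmulB B x y) = x * y := by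
  rfl

lemma tmulB_rel (B : Subring A) (x y : A) (b : B) :
    tmulB B (x * b) y = tmulB B x (b * y) := by
  rw [tmulB, tmulB, Submodule.Quotient.eq]
  exact Submodule.subset_span ⟨x, y, b, rfl⟩

lemma lmulB_add_arg (B : Subring A) (a b : A) (t : TensorOverSub B) :
    lmulB B (a + b) t = lmulB B a t + lmulB B b t := by
  induction t using TensorOverSub.induction with
  | zero => simp
  | tmul x y => simp [add_mul]
  | add s t hs ht => simp only [map_add, hs, ht]; abel

lemma rmulB_add_arg (B : Subring A) (a b : A) (t : TensorOverSub B) :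
    rmulB B (a + b) t = rmulB B a t + rmulB B b t := by
  induction t using TensorOverSub.induction with
  | zero => simp
  | tmul x y => simp [mul_add]
  | add s t hs ht => simp only [map_add, hs, ht]; abel

variable {A₁ A₂ : Type*} [Ring A₁] [Ring A₂]

/-- Functoriality of `A ⊗_B A` along a ring hom mapping `B₁` into `B₂`. -/
noncomputable def sepMap (B₁ : Subring A₁) (B₂ : Subring A₂) (f : A₁ →+* A₂)
    (hf : ∀ b ∈ B₁, f b ∈ B₂) : TensorOverSub B₁ →ₗ[ℤ] TensorOverSub B₂ :=
  Submodule.mapQ _ _ (TensorProduct.map f.toAddMonoidHom.toIntLinearMap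
      f.toAddMonoidHom.toIntLinearMap) (by
    refine Submodule.span_le.mpr ?_
    rintro _ ⟨x, y, b, rfl⟩
    simp only [SetLike.mem_coe, Submodule.mem_comap, map_sub, TensorProduct.map_tmul,
      AddMonoidHom.coe_toIntLinearMap]
    refine Submodule.subset_span ⟨f x, f y, ⟨f b, hf b b.2⟩, ?_⟩
    erw [map_sub, TensorProduct.map_tmul, TensorProduct.map_tmul]
    simp [map_mul])

@[simp] lemma sepMap_tmulB (B₁ : Subring A₁) (B₂ : Subring A₂) (f : A₁ →+* A₂)
    (hf : ∀ b ∈ B₁, f b ∈ B₂) (x y : A₁) :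
    sepMap B₁ B₂ f hf (tmulB B₁ x y) = tmulB B₂ (f x) (f y) := by
  rfl

lemma mulMapB_sepMap (B₁ : Subring A₁) (B₂ : Subring A₂) (f : A₁ →+* A₂)
    (hf : ∀ b ∈ B₁, f b ∈ B₂) (t : TensorOverSub B₁) :
    mulMapB B₂ (sepMap B₁ B₂ f hf t) = f (mulMapB B₁ t) := by
  induction t using TensorOverSub.induction with
  | zero => simp
  | tmul x y => simp [map_mul]
  | add s t hs ht => simp [map_add, hs, ht]

lemma lmulB_sepMap (B₁ : Subring A₁) (B₂ : Subring A₂) (f : A₁ →+* A₂)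
    (hf : ∀ b ∈ B₁, f b ∈ B₂) (a : A₁) (t : TensorOverSub B₁) :
    lmulB B₂ (f a) (sepMap B₁ B₂ f hf t) = sepMap B₁ B₂ f hf (lmulB B₁ a t) := by
  induction t using TensorOverSub.induction with
  | zero => simp
  | tmul x y => simp [map_mul]
  | add s t hs ht => simp [map_add, hs, ht]

lemma rmulB_sepMap (B₁ : Subring A₁) (B₂ : Subring A₂) (f : A₁ →+* A₂)
    (hf : ∀ b ∈ B₁, f b ∈ B₂) (a : A₁) (t : TensorOverSub B₁) :
    rmulB B₂ (f a) (sepMap B₁ B₂ f hf t) = sepMap B₁ B₂ f hf (rmulB B₁ a t) := by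
  induction t using TensorOverSub.induction with
  | zero => simp
  | tmul x y => simp [map_mul]
  | add s t hs ht => simp [map_add, hs, ht]

end AuxSep

/-- If `A = A' ⊕ I` and `B = B' ⊕ I` (internal direct sums of additive
groups) where `I` is a two-sided ideal of `A` contained in `B`, `A' ⊇ B'` are
subrings and `B' = B ∩ A'`, then `A'` is separable over `B'` iff `A` is separable
over `B`. -/
theorem separable_ideal_complement {A : Type*} [Ring A] (I : Ideal A)
    (hI : ∀ x ∈ I, ∀ a : A, x * a ∈ I)
    (A' B' B : Subring A)
    (hB'A' : B' ≤ A')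
    (hB'B : B' ≤ B)
    (hIB : (I : Set A) ⊆ (B : Set A))
    (hBcap : B' = B ⊓ A')
    (hAsum : A'.toAddSubgroup ⊔ I.toAddSubgroup = ⊤)
    (hAdisj : A'.toAddSubgroup ⊓ I.toAddSubgroup = ⊥)
    (hBsum : B'.toAddSubgroup ⊔ I.toAddSubgroup = B.toAddSubgroup)
    (hBdisj : B'.toAddSubgroup ⊓ I.toAddSubgroup = ⊥) :
    IsSepExt (B'.comap A'.subtype) ↔ IsSepExt B := by
  classical
  -- additive decomposition A = A' ⊕ I
  have hdec : ∀ a : A, ∃ x, x ∈ A' ∧ ∃ z, z ∈ I ∧ a = x + z := by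
    intro a
    have ha : a ∈ A'.toAddSubgroup ⊔ I.toAddSubgroup := hAsum ▸ AddSubgroup.mem_top a
    rcases AddSubgroup.mem_sup.mp ha with ⟨x, hx, z, hz, hxz⟩
    exact ⟨x, hx, z, hz, hxz.symm⟩
  choose p hp q hq hpq using hdec
  have huniq : ∀ x ∈ A', ∀ z ∈ I, x + z = 0 → x = 0 := by
    intro x hx z hz h
    have hxI : x ∈ I := by
      have : x = -z := eq_neg_of_add_eq_zero_left h
      rw [this]; exact neg_mem hz
    have : x ∈ A'.toAddSubgroup ⊓ I.toAddSubgroup := ⟨hx, hxI⟩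
    rw [hAdisj] at this
    exact AddSubgroup.mem_bot.mp this
  have p_spec : ∀ x ∈ A', ∀ z ∈ I, p (x + z) = x := by
    intro x hx z hz
    have h1 : (x - p (x + z)) + (z - q (x + z)) = 0 := by
      rw [sub_add_sub_comm]
      exact sub_eq_zero.mpr (hpq (x + z))
    have := huniq _ (A'.toAddSubgroup.sub_mem hx (hp _)) _ (sub_mem hz (hq _)) h1
    have := sub_eq_zero.mp this
    exact this.symm
  have p_add : ∀ a b : A, p (a + b) = p a + p b := by
    intro a b
    have h : a + b = (p a + p b) + (q a + q b) := by
      conv_lhs => rw [hpq a, hpq b]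
      abel
    rw [h, p_spec _ (add_mem (hp a) (hp b)) _ (add_mem (hq a) (hq b))]
  have p_one : p 1 = 1 := by
    conv_lhs => rw [show (1:A) = 1 + 0 from (add_zero _).symm]
    rw [p_spec 1 A'.one_mem 0 I.zero_mem]
  have p_zero : p 0 = 0 := by
    conv_lhs => rw [show (0:A) = 0 + 0 from (add_zero _).symm]
    rw [p_spec 0 A'.zero_mem 0 I.zero_mem]
  have p_mul : ∀ a b : A, p (a * b) = p a * p b := by
    intro a b
    have h : a * b = p a * p b + (p a * q b + (q a * p b + q a * q b)) := by
      conv_lhs => rw [hpq a, hpq b]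
      noncomm_ring
    rw [h, p_spec _ (A'.mul_mem (hp a) (hp b)) _ (add_mem (I.mul_mem_left _ (hq b))
      (add_mem (hI _ (hq a) _) (hI _ (hq a) _)))]
  have p_fix : ∀ x ∈ A', p x = x := by
    intro x hx
    conv_lhs => rw [show x = x + 0 from (add_zero _).symm]
    rw [p_spec x hx 0 I.zero_mem]
  have p_B : ∀ b ∈ B, p b ∈ B' := by
    intro b hb
    have hqb : q b ∈ B := hIB (hq b)
    have hpb : p b ∈ B := by
      have : p b = b - q b := eq_sub_of_add_eq (hpq b).symm
      rw [this]; exact B.sub_mem hb hqb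
    rw [hBcap]
    exact ⟨hpb, hp b⟩
  -- the projection ring hom π : A → A'
  let π : A →+* A' := {
    toFun := fun a => ⟨p a, hp a⟩
    map_one' := Subtype.ext p_one
    map_mul' := fun a b => Subtype.ext (p_mul a b)
    map_zero' := Subtype.ext p_zero
    map_add' := fun a b => Subtype.ext (p_add a b) }
  have hπB : ∀ b ∈ B, π b ∈ B'.comap A'.subtype := by
    intro b hb
    simpa [π, Subring.mem_comap] using p_B b hb
  have hιB : ∀ b ∈ B'.comap A'.subtype, A'.subtype b ∈ B := by
    intro b hb
    exact hB'B (by simpa [Subring.mem_comap] using hb)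
  set B'' := B'.comap A'.subtype with hB''def
  constructor
  · rintro ⟨e, he1, he2⟩
    refine ⟨sepMap B'' B A'.subtype hιB e, ?_, ?_⟩
    · have hA'case : ∀ x : A', lmulB B (x : A) (sepMap B'' B A'.subtype hιB e)
          = rmulB B (x : A) (sepMap B'' B A'.subtype hιB e) := by
        intro x
        have h1 := lmulB_sepMap B'' B A'.subtype hιB x e
        have h2 := rmulB_sepMap B'' B A'.subtype hιB x e
        simp only [Subring.coe_subtype] at h1 h2
        rw [h1, h2, he1 x]
      have hIcase : ∀ i ∈ I, lmulB B i (sepMap B'' B A'.subtype hιB e)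
          = rmulB B i (sepMap B'' B A'.subtype hιB e) := by
        intro i hi
        have hL : ∀ t, lmulB B i (sepMap B'' B A'.subtype hιB t)
            = tmulB B 1 (i * (mulMapB B'' t : A)) := by
          intro t
          induction t using TensorOverSub.induction with
          | zero => simp
          | tmul x y =>
            rw [sepMap_tmulB, lmulB_tmulB, mulMapB_tmulB]
            have hmem : i * (A'.subtype x) ∈ B := hIB (hI i hi _)
            have := tmulB_rel B 1 (A'.subtype y) ⟨i * A'.subtype x, hmem⟩
            simp only [one_mul] at this
            rw [this]
            simp [mul_assoc]
          | add s t hs ht =>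
            simp only [map_add, hs, ht]
            push_cast
            rw [mul_add, tmulB_add_right]
        have hR : ∀ t, rmulB B i (sepMap B'' B A'.subtype hιB t)
            = tmulB B ((mulMapB B'' t : A) * i) 1 := by
          intro t
          induction t using TensorOverSub.induction with
          | zero => simp
          | tmul x y =>
            rw [sepMap_tmulB, rmulB_tmulB, mulMapB_tmulB]
            have hyi : (A'.subtype y) * i ∈ I := I.mul_mem_left _ hi
            have hmem : (A'.subtype y) * i ∈ B := hIB hyi
            have := tmulB_rel B (A'.subtype x) 1 ⟨A'.subtype y * i, hmem⟩
            simp only [mul_one] at this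
            rw [← this]
            simp [Subring.coe_subtype, mul_assoc]
          | add s t hs ht =>
            simp only [map_add, hs, ht]
            push_cast
            rw [add_mul, tmulB_add_left]
        rw [hL e, hR e, he2]
        have := tmulB_rel B 1 1 ⟨i, hIB hi⟩
        simp only [one_mul, mul_one] at this
        simpa using this.symm
      intro a
      rw [hpq a, lmulB_add_arg, rmulB_add_arg, hA'case ⟨p a, hp a⟩, hIcase (q a) (hq a)]
    · rw [mulMapB_sepMap, he2]
      simp
  · rintro ⟨e, he1, he2⟩
    refine ⟨sepMap B B'' π hπB e, ?_, ?_⟩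
    · intro x
      have hx : π (x : A) = x := Subtype.ext (p_fix _ x.2)
      have h1 := lmulB_sepMap B B'' π hπB (x : A) e
      have h2 := rmulB_sepMap B B'' π hπB (x : A) e
      rw [hx] at h1 h2
      rw [h1, h2, he1]
    · rw [mulMapB_sepMap, he2, map_one]
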